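/- Suppose a ∈ ℂ is nonzero and a_1ω_1 + ··· + a_kω_k = a = a_1'ω_1' + ··· + a_k'ω_k' are two representations with rational coefficients, all ω_i, ω_j' roots of unity, and neither representation has a vanishing nonempty proper subsum. Then for every index j there exists an index i such that (ω_j'/ω_i)^{Θ(2k)} = 1, where Θ(m) is the product of primes at most m. -/

import Mathlib

open Polynomial IntermediateField Module Finset

lemma li_pows (F : IntermediateField ℚ ℂ) (ζ : ℂ) (hζint : IsIntegral F ζ) :
    LinearIndependent F (fun c : Fin (minpoly F ζ).natDegree => ζ ^ (c : ℕ)) := by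
  have h2 := ((IntermediateField.adjoin.powerBasis hζint).basis.linearIndependent).map'
    ((F⟮ζ⟯.val).toLinearMap) (LinearMap.ker_eq_bot.mpr (F⟮ζ⟯.val.injective))
  have he : (⇑(F⟮ζ⟯.val.toLinearMap) ∘ ⇑(IntermediateField.adjoin.powerBasis hζint).basis)
      = fun c : Fin (minpoly F ζ).natDegree => ζ ^ (c : ℕ) := by
    funext c
    simp only [Function.comp_apply, PowerBasis.coe_basis, adjoin.powerBasis_gen,
      AlgHom.toLinearMap_apply, map_pow]
    rfl
  rwa [he] at h2

lemma deg_ge (p aa M : ℕ) (hp : p.Prime) (ha : 1 ≤ aa) (hM : 0 < M) (hpM : ¬ p ∣ M)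
    (ζ μ : ℂ) (hζ : IsPrimitiveRoot ζ (p ^ aa)) (hμ : IsPrimitiveRoot μ (p ^ (aa - 1) * M)) :
    (if 2 ≤ aa then p else p - 1) ≤ (minpoly ℚ⟮μ⟯ ζ).natDegree := by
  have hppos := hp.pos
  have hn'pos : 0 < p ^ (aa - 1) * M := Nat.mul_pos (pow_pos hppos _) hM
  have hnpos : 0 < p ^ aa * M := Nat.mul_pos (pow_pos hppos _) hM
  have hμint : IsIntegral ℚ μ := (hμ.isIntegral hn'pos).tower_top
  have hζint : IsIntegral ℚ ζ := (hζ.isIntegral (pow_pos hppos _)).tower_top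
  set F := ℚ⟮μ⟯
  have hζintF : IsIntegral F ζ := hζint.tower_top
  haveI : FiniteDimensional ℚ F := adjoin.finiteDimensional hμint
  have hfr : finrank ℚ F = (p ^ (aa - 1) * M).totient := by
    rw [adjoin.finrank hμint, ← cyclotomic_eq_minpoly_rat hμ hn'pos, natDegree_cyclotomic]
  set L : IntermediateField F ℂ := F⟮ζ⟯
  haveI : FiniteDimensional F L := adjoin.finiteDimensional hζintF
  have hfr2 : finrank F L = (minpoly F ζ).natDegree := adjoin.finrank hζintF
  have hζL : IsPrimitiveRoot (AdjoinSimple.gen F ζ) (p ^ aa) :=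
    IsPrimitiveRoot.coe_submonoidClass_iff.mp hζ
  have hμmem : μ ∈ L := L.algebraMap_mem ⟨μ, mem_adjoin_simple_self ℚ μ⟩
  have hμL : IsPrimitiveRoot (⟨μ, hμmem⟩ : L) (p ^ (aa - 1) * M) :=
    IsPrimitiveRoot.coe_submonoidClass_iff.mp hμ
  -- finite dimensional over ℚ
  haveI : FiniteDimensional ℚ L := FiniteDimensional.trans ℚ F L
  have hlcm : Nat.lcm (p ^ aa) (p ^ (aa - 1) * M) = p ^ aa * M := by
    have hcop : Nat.Coprime (p ^ aa) M := Nat.Coprime.pow_left _ ((hp.coprime_iff_not_dvd).mpr hpM)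
    apply Nat.dvd_antisymm
    · exact Nat.lcm_dvd (dvd_mul_right _ _) (mul_dvd_mul (pow_dvd_pow p (Nat.sub_le _ _)) dvd_rfl)
    · exact hcop.mul_dvd_of_dvd_of_dvd (Nat.dvd_lcm_left _ _)
        (dvd_trans (dvd_mul_left _ _) (Nat.dvd_lcm_right _ _))
  have hbig : (p ^ aa * M).totient ≤ finrank ℚ L := by
    have := hζL.lcm_totient_le_finrank hμL
      (by rw [hlcm]; exact Polynomial.cyclotomic.irreducible_rat hnpos)
    rwa [hlcm] at this
  have htower : finrank ℚ F * finrank F L = finrank ℚ L := finrank_mul_finrank ℚ F L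
  -- totient multiplicativity
  have hcop1 : Nat.Coprime (p ^ aa) M := Nat.Coprime.pow_left _ ((hp.coprime_iff_not_dvd).mpr hpM)
  have hcop2 : Nat.Coprime (p ^ (aa - 1)) M := Nat.Coprime.pow_left _ ((hp.coprime_iff_not_dvd).mpr hpM)
  have htot : (p ^ aa * M).totient = (p ^ (aa - 1) * M).totient * (if 2 ≤ aa then p else p - 1) := by
    rw [Nat.totient_mul hcop1, Nat.totient_mul hcop2]
    rcases Nat.lt_or_ge aa 2 with h2 | h2
    · interval_cases aa
      · simp [Nat.totient_prime hp, Nat.mul_comm]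
    · rw [if_pos h2]
      have e1 : aa = (aa - 1) + 1 := (Nat.succ_pred_eq_of_pos ha).symm
      rw [Nat.totient_prime_pow hp (by omega), Nat.totient_prime_pow hp (by omega)]
      rw [show aa - 1 = aa - 1 - 1 + 1 by omega, pow_succ,
        Nat.add_sub_cancel]
      ring
  have : (p ^ (aa - 1) * M).totient * (if 2 ≤ aa then p else p - 1)
      ≤ (p ^ (aa - 1) * M).totient * (minpoly F ζ).natDegree := by
    calc _ = (p ^ aa * M).totient := htot.symm
    _ ≤ finrank ℚ L := hbig
    _ = finrank ℚ F * finrank F L := htower.symm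
    _ = _ := by rw [hfr, hfr2]
  exact Nat.le_of_mul_le_mul_left this (Nat.totient_pos.mpr hn'pos)

set_option maxHeartbeats 800000 in
lemma key_li (p aa M : ℕ) (hp : p.Prime) (ha : 1 ≤ aa) (hM : 0 < M) (hpM : ¬ p ∣ M)
    (ζ μ : ℂ) (hζ : IsPrimitiveRoot ζ (p ^ aa)) (hμ : IsPrimitiveRoot μ (p ^ (aa - 1) * M))
    (A : ℕ → ℂ) (hA : ∀ c, A c ∈ ℚ⟮μ⟯)
    (hrel : ∑ c ∈ Finset.range p, A c * ζ ^ c = 0) :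
    (∀ c < p, ∀ c' < p, A c = A c') ∧ (2 ≤ aa → ∀ c < p, A c = 0) := by
  have hppos := hp.pos
  set F := ℚ⟮μ⟯ with hF
  have hζint : IsIntegral ℚ ζ := ((hζ.isIntegral (pow_pos hppos _)).tower_top)
  have hζintF : IsIntegral F ζ := hζint.tower_top
  set d := (minpoly F ζ).natDegree with hd
  have hdeg := deg_ge p aa M hp ha hM hpM ζ μ hζ hμ
  have hLI := li_pows F ζ hζintF
  rw [Fintype.linearIndependent_iff] at hLI
  -- main case split
  rcases Nat.lt_or_ge aa 2 with h2 | h2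
  · -- aa = 1
    have haa : aa = 1 := by omega
    have hpd : p - 1 ≤ d := by rw [if_neg (by omega)] at hdeg; exact hdeg
    have hζp : IsPrimitiveRoot ζ p := by rwa [haa, pow_one] at hζ
    have hgeom : ∑ c ∈ Finset.range p, ζ ^ c = 0 := hζp.geom_sum_eq_zero hp.one_lt
    set g : Fin d → F := fun c => if h : (c : ℕ) < p - 1
      then ⟨A c - A (p - 1), sub_mem (hA _) (hA _)⟩ else 0 with hg
    have hsum : ∑ c : Fin d, g c • ζ ^ (c : ℕ) = 0 := by
      have : ∀ c : Fin d, g c • ζ ^ (c : ℕ)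
          = if (c : ℕ) < p - 1 then (A c - A (p - 1)) * ζ ^ (c : ℕ) else 0 := by
        intro c
        by_cases h : (c : ℕ) < p - 1 <;> simp [hg, h] <;> rfl
      rw [Finset.sum_congr rfl (fun c _ => this c), Fin.sum_univ_eq_sum_range
        (fun c => if c < p - 1 then (A c - A (p - 1)) * ζ ^ c else 0)]
      rw [← Finset.sum_subset (Finset.range_subset_range.mpr hpd)
        (by intro x _ hx; rw [if_neg (by simpa using hx)])]
      have : ∑ c ∈ Finset.range (p - 1), (if c < p - 1 then (A c - A (p - 1)) * ζ ^ c else 0)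
          = ∑ c ∈ Finset.range (p - 1), (A c - A (p - 1)) * ζ ^ c := by
        apply Finset.sum_congr rfl; intro c hc; rw [if_pos (by simpa using hc)]
      rw [this]
      have hsplit : ∑ c ∈ Finset.range p, (A c - A (p - 1)) * ζ ^ c
          = ∑ c ∈ Finset.range (p - 1), (A c - A (p - 1)) * ζ ^ c := by
        rw [show p = (p - 1) + 1 by omega, Finset.sum_range_succ]
        simp
      rw [← hsplit]
      have : ∑ c ∈ Finset.range p, (A c - A (p - 1)) * ζ ^ c
          = (∑ c ∈ Finset.range p, A c * ζ ^ c) - A (p - 1) * ∑ c ∈ Finset.range p, ζ ^ c := by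
        rw [Finset.mul_sum, ← Finset.sum_sub_distrib]
        apply Finset.sum_congr rfl; intros; ring
      rw [this, hrel, hgeom]; ring
    have hz := hLI g hsum
    have heq : ∀ c < p, A c = A (p - 1) := by
      intro c hc
      rcases Nat.lt_or_ge c (p - 1) with h | h
      · have := hz ⟨c, lt_of_lt_of_le h hpd⟩
        rw [hg] at this
        simp only [dif_pos h] at this
        have := congrArg (Subtype.val) this
        simpa [sub_eq_zero] using this
      · have : c = p - 1 := by omega
        rw [this]
    exact ⟨fun c hc c' hc' => by rw [heq c hc, heq c' hc'], fun h => absurd h (by omega)⟩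
  · -- aa ≥ 2
    have hpd : p ≤ d := by rwa [if_pos h2] at hdeg
    set g : Fin d → F := fun c => if h : (c : ℕ) < p then ⟨A c, hA _⟩ else 0 with hg
    have hsum : ∑ c : Fin d, g c • ζ ^ (c : ℕ) = 0 := by
      have : ∀ c : Fin d, g c • ζ ^ (c : ℕ)
          = if (c : ℕ) < p then A c * ζ ^ (c : ℕ) else 0 := by
        intro c
        by_cases h : (c : ℕ) < p <;> simp [hg, h] <;> rfl
      rw [Finset.sum_congr rfl (fun c _ => this c), Fin.sum_univ_eq_sum_range
        (fun c => if c < p then A c * ζ ^ c else 0)]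
      rw [← Finset.sum_subset (Finset.range_subset_range.mpr hpd)
        (by intro x _ hx; rw [if_neg (by simpa using hx)])]
      rw [← hrel]
      apply Finset.sum_congr rfl; intro c hc; rw [if_pos (by simpa using hc)]
    have hz := hLI g hsum
    have hzero : ∀ c < p, A c = 0 := by
      intro c hc
      have := hz ⟨c, lt_of_lt_of_le hc hpd⟩
      rw [hg] at this
      simp only [dif_pos hc] at this
      have := congrArg (Subtype.val) this
      simpa using this
    exact ⟨fun c hc c' hc' => by rw [hzero c hc, hzero c' hc'], fun _ => hzero⟩

set_option maxHeartbeats 800000 in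
lemma core (ι : Type) [Fintype ι] [DecidableEq ι] (q : ι → ℚ) (v : ι → ℂ) (j : ι)
    (hv : ∀ i, ∃ m, 0 < m ∧ v i ^ m = 1) (hvj : v j = 1)
    (hsum : ∑ i, (q i : ℂ) * v i = 0)
    (hsub : ∀ I : Finset ι, I.Nonempty → I ≠ Finset.univ → ∑ i ∈ I, (q i : ℂ) * v i ≠ 0) :
    ∀ i, v i ^ (((Finset.range (Fintype.card ι + 1)).filter Nat.Prime).prod id) = 1 := by
  classical
  have hfin : ∀ i, IsOfFinOrder (v i) := by
    intro i; obtain ⟨m, hm, h⟩ := hv i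
    exact isOfFinOrder_iff_pow_eq_one.mpr ⟨m, hm, h⟩
  set N : ℕ := Finset.univ.lcm fun i => orderOf (v i) with hN
  have hordpos : ∀ i, 0 < orderOf (v i) := fun i => (hfin i).orderOf_pos
  have hdvdN : ∀ i, orderOf (v i) ∣ N := fun i => Finset.dvd_lcm (Finset.mem_univ i)
  have hvN : ∀ i, v i ^ N = 1 := fun i => orderOf_dvd_iff_pow_eq_one.mp (hdvdN i)
  have hN0 : N ≠ 0 := by
    rw [hN, Ne, Finset.lcm_eq_zero_iff]
    intro h
    obtain ⟨i, -, hi⟩ := Set.mem_image _ _ _ |>.mp h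
    exact (hordpos i).ne' hi
  have hNpos : 0 < N := Nat.pos_of_ne_zero hN0
  -- main claim
  have claim : ∀ p : ℕ, p.Prime → p ∣ N → p ≤ Fintype.card ι ∧ ¬ (p * p ∣ N) := by
    intro p hp hpN
    haveI : Fact p.Prime := ⟨hp⟩
    have hppos := hp.pos
    set aa : ℕ := N.factorization p with haa
    have ha : 1 ≤ aa := hp.factorization_pos_of_dvd hN0 hpN
    set M : ℕ := N / p ^ aa with hM'
    have hNM : p ^ aa * M = N := Nat.ordProj_mul_ordCompl_eq_self N p
    have hpM : ¬ p ∣ M := Nat.not_dvd_ordCompl hp hN0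
    have hMpos : 0 < M := Nat.pos_of_ne_zero (fun h => hN0 (by rw [← hNM, h, mul_zero]))
    set ξ : ℂ := Complex.exp (2 * Real.pi * Complex.I / N) with hξdef
    have hξ : IsPrimitiveRoot ξ N := Complex.isPrimitiveRoot_exp N hN0
    haveI : NeZero N := ⟨hN0⟩
    set ζ : ℂ := ξ ^ M with hζdef
    have hζ : IsPrimitiveRoot ζ (p ^ aa) := hξ.pow hNpos (by rw [mul_comm] at hNM; exact hNM.symm)
    set μ : ℂ := ξ ^ p with hμdef
    have hμ : IsPrimitiveRoot μ (p ^ (aa - 1) * M) := by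
      apply hξ.pow hNpos
      rw [← hNM, show aa = (aa - 1) + 1 by omega, pow_succ, Nat.add_sub_cancel]
      ring
    -- decomposition
    choose e he hve using fun i => hξ.eq_pow_of_pow_eq_one (hvN i)
    set cf : ι → ℕ := fun i => (((e i : ZMod p) * (M : ZMod p)⁻¹).val) with hcf
    have hcflt : ∀ i, cf i < p := fun i => ZMod.val_lt _
    have hMne : (M : ZMod p) ≠ 0 := by
      rw [Ne, ZMod.natCast_eq_zero_iff]; exact hpM
    have hdvd : ∀ i, (p : ℤ) ∣ ((e i : ℤ) - M * cf i) := by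
      intro i
      rw [← ZMod.intCast_zmod_eq_zero_iff_dvd]
      push_cast
      simp only [hcf]
      rw [ZMod.natCast_val, ZMod.cast_id]
      field_simp
      simp
    have hdecomp : ∀ i, ∃ f : ℤ, v i = ζ ^ (cf i) * μ ^ f := by
      intro i
      obtain ⟨f, hf⟩ := hdvd i
      refine ⟨f, ?_⟩
      have : v i = ξ ^ ((e i : ℤ)) := by rw [zpow_natCast, hve]
      rw [this, hζdef, hμdef, ← zpow_natCast (ξ ^ M), ← zpow_natCast ξ M, ← zpow_mul, ← zpow_natCast ξ p, ← zpow_mul,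
        ← zpow_add₀ (hξ.ne_zero hN0)]
      congr 1
      push_cast
      omega
    choose f hf using hdecomp
    set η : ι → ℂ := fun i => μ ^ (f i) with hη
    have hημem : ∀ i, η i ∈ ℚ⟮μ⟯ := fun i => zpow_mem (mem_adjoin_simple_self ℚ μ) _
    have hηroot : ∀ i, η i ^ (p ^ (aa - 1) * M) = 1 := by
      intro i
      rw [hη, ← zpow_natCast (μ ^ f i), ← zpow_mul, mul_comm (f i), zpow_mul, zpow_natCast, hμ.pow_eq_one, one_zpow]
    set A : ℕ → ℂ := fun cc => ∑ i ∈ Finset.univ.filter fun i => cf i = cc, (q i : ℂ) * η i with hA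
    have hAmem : ∀ cc, A cc ∈ ℚ⟮μ⟯ := by
      intro cc
      apply sum_mem
      intro i _
      exact mul_mem (SubfieldClass.ratCast_mem _ _) (hημem i)
    have hrel : ∑ cc ∈ Finset.range p, A cc * ζ ^ cc = 0 := by
      rw [← hsum, hA]
      simp only [Finset.sum_mul]
      have step : ∀ x ∈ Finset.range p,
          ∑ i ∈ Finset.univ.filter (fun i => cf i = x), (q i : ℂ) * η i * ζ ^ x
          = ∑ i ∈ Finset.univ.filter (fun i => cf i = x), (q i : ℂ) * η i * ζ ^ cf i := by
        intro x _
        apply Finset.sum_congr rfl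
        intro i hi
        rw [(Finset.mem_filter.mp hi).2]
      rw [Finset.sum_congr rfl step,
        Finset.sum_fiberwise_of_maps_to (fun i _ => Finset.mem_range.mpr (hcflt i))
          (fun i => (q i : ℂ) * η i * ζ ^ (cf i))]
      apply Finset.sum_congr rfl
      intro i _
      rw [hf i]; ring
    have hkey := key_li p aa M hp ha hMpos hpM ζ μ hζ hμ A hAmem hrel
    have hallzero_false : ¬ (∀ c < p, A c = 0) := by
      intro hall
      have hej : e j = 0 := by
        have h1 : ξ ^ e j = 1 := by rw [hve j, hvj]
        exact Nat.eq_zero_of_dvd_of_lt ((hξ.pow_eq_one_iff_dvd _).mp h1) (he j)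
      have hcfj : cf j = 0 := by rw [hcf]; simp [hej]
      set I : Finset ι := Finset.univ.filter fun i => cf i = 0 with hI
      have hjI : j ∈ I := Finset.mem_filter.mpr ⟨Finset.mem_univ j, hcfj⟩
      have hIsum : ∑ i ∈ I, (q i : ℂ) * v i = 0 := by
        have h1 : ∑ i ∈ I, (q i : ℂ) * v i = A 0 := by
          rw [hA]
          apply Finset.sum_congr rfl
          intro i hi
          rw [hf i, (Finset.mem_filter.mp hi).2, pow_zero, one_mul]
        rw [h1, hall 0 hppos]
      have hIuniv : I = Finset.univ := by
        by_contra hne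
        exact hsub I ⟨j, hjI⟩ hne hIsum
      have hdvd1 : N ∣ p ^ (aa - 1) * M := by
        rw [hN]
        apply Finset.lcm_dvd
        intro i _
        apply orderOf_dvd_iff_pow_eq_one.mpr
        have hcfi : cf i = 0 := by
          have : i ∈ I := hIuniv ▸ Finset.mem_univ i
          exact (Finset.mem_filter.mp this).2
        rw [hf i, hcfi, pow_zero, one_mul]
        exact hηroot i
      have hdvd2 : p ^ aa ∣ p ^ (aa - 1) * M := dvd_trans (Nat.ordProj_dvd N p) hdvd1
      have hpMdvd : p ∣ M := by
        have h1 : p ^ (aa - 1) * p ∣ p ^ (aa - 1) * M := by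
          rw [← pow_succ, show aa - 1 + 1 = aa by omega]
          exact hdvd2
        exact (Nat.mul_dvd_mul_iff_left (pow_pos hppos _)).mp h1
      exact hpM hpMdvd
    constructor
    · by_contra hgt
      push_neg at hgt
      have himage : ¬ (Finset.range p ⊆ Finset.image cf Finset.univ) := by
        intro hsubset
        have h1 := Finset.card_le_card hsubset
        rw [Finset.card_range] at h1
        have h2 := Finset.card_image_le (s := Finset.univ) (f := cf)
        rw [Finset.card_univ] at h2
        omega
      obtain ⟨cc, hccp, hccnot⟩ := Finset.not_subset.mp himage
      have hAcc : A cc = 0 := by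
        rw [hA]
        apply Finset.sum_eq_zero
        intro i hi
        have h3 : cc ∈ Finset.image cf Finset.univ :=
          (Finset.mem_filter.mp hi).2 ▸ Finset.mem_image_of_mem cf (Finset.mem_univ i)
        exact absurd h3 hccnot
      have hall : ∀ c < p, A c = 0 := fun c hc => by
        rw [hkey.1 c hc cc (Finset.mem_range.mp hccp), hAcc]
      exact hallzero_false hall
    · intro hpp
      have h2 : 2 ≤ aa := by
        rw [haa]
        exact (hp.pow_dvd_iff_le_factorization hN0).mp (by rw [pow_two]; exact hpp)
      exact hallzero_false (hkey.2 h2)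
  -- conclude
  have hsq : Squarefree N := Nat.squarefree_iff_prime_squarefree.mpr
    (fun p hp hpp => (claim p hp (dvd_trans (dvd_mul_right p p) hpp)).2 hpp)
  have hNdvd : N ∣ ((Finset.range (Fintype.card ι + 1)).filter Nat.Prime).prod id := by
    have hprod : ∏ p ∈ N.primeFactors, p = N := Nat.prod_primeFactors_of_squarefree hsq
    rw [← hprod]
    apply Finset.prod_dvd_prod_of_subset
    intro p hp
    have hp' := Nat.prime_of_mem_primeFactors hp
    have hpN := Nat.dvd_of_mem_primeFactors hp
    refine Finset.mem_filter.mpr ⟨Finset.mem_range.mpr ?_, hp'⟩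
    have := (claim p hp' hpN).1
    omega
  intro i
  exact orderOf_dvd_iff_pow_eq_one.mp ((hdvdN i).trans hNdvd)

lemma mann (ι : Type) [Fintype ι] [DecidableEq ι] (q : ι → ℚ) (w : ι → ℂ)
    (hw : ∀ i, ∃ m, 0 < m ∧ w i ^ m = 1)
    (hsum : ∑ i, (q i : ℂ) * w i = 0)
    (hsub : ∀ I : Finset ι, I.Nonempty → I ≠ Finset.univ → ∑ i ∈ I, (q i : ℂ) * w i ≠ 0)
    (i j : ι) :
    (w i / w j) ^ (((Finset.range (Fintype.card ι + 1)).filter Nat.Prime).prod id) = 1 := by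
  have hwne : ∀ i, w i ≠ 0 := by
    intro i h0
    obtain ⟨m, hm, hpow⟩ := hw i
    rw [h0, zero_pow hm.ne'] at hpow
    exact zero_ne_one hpow
  set v : ι → ℂ := fun i => w i / w j with hv
  have hv1 : v j = 1 := div_self (hwne j)
  have hvroot : ∀ i, ∃ m, 0 < m ∧ v i ^ m = 1 := by
    intro i
    obtain ⟨m, hm, hpow⟩ := hw i
    obtain ⟨m', hm', hpow'⟩ := hw j
    exact ⟨m * m', Nat.mul_pos hm hm', by
      rw [hv]
      simp only [div_pow]
      rw [pow_mul, hpow, one_pow, mul_comm, pow_mul, hpow', one_pow, div_one]⟩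
  have hvsum : ∑ i, (q i : ℂ) * v i = 0 := by
    rw [hv]
    simp only [mul_div_assoc']
    rw [← Finset.sum_div, hsum, zero_div]
  have hvsub : ∀ I : Finset ι, I.Nonempty → I ≠ Finset.univ → ∑ i ∈ I, (q i : ℂ) * v i ≠ 0 := by
    intro I hI hIne h0
    apply hsub I hI hIne
    rw [hv] at h0
    simp only [mul_div_assoc'] at h0
    rw [← Finset.sum_div, _root_.div_eq_zero_iff] at h0
    exact h0.resolve_right (hwne j)
  exact core ι q v j hvroot hv1 hvsum hvsub i

/-- If `a ≠ 0` and `a_1 ω_1 + ⋯ + a_k ω_k = a = a_1' ω_1' + ⋯ + a_k' ω_k'` are two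
representations with rational coefficients, all `ω_i, ω_j'` roots of unity, and
neither representation has a vanishing nonempty proper subsum, then for every `j`
there is an `i` with `(ω_j' / ω_i) ^ Θ(2k) = 1`, where `Θ(m)` is the product of
the primes `p ≤ m`. -/
theorem two_representations
    (k : ℕ) (a : ℂ) (ha : a ≠ 0)
    (b b' : Fin k → ℚ) (ω ω' : Fin k → ℂ)
    (hω : ∀ i, ∃ m : ℕ, 0 < m ∧ ω i ^ m = 1)
    (hω' : ∀ i, ∃ m : ℕ, 0 < m ∧ ω' i ^ m = 1)
    (hsum : ∑ i : Fin k, (b i : ℂ) * ω i = a)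
    (hsum' : ∑ i : Fin k, (b' i : ℂ) * ω' i = a)
    (hsub : ∀ I : Finset (Fin k), I.Nonempty → I ≠ Finset.univ →
      ∑ i ∈ I, (b i : ℂ) * ω i ≠ 0)
    (hsub' : ∀ I : Finset (Fin k), I.Nonempty → I ≠ Finset.univ →
      ∑ i ∈ I, (b' i : ℂ) * ω' i ≠ 0) :
    ∀ j : Fin k, ∃ i : Fin k,
      (ω' j / ω i) ^ ((Finset.range (2 * k + 1)).filter Nat.Prime).prod id = 1 := by
  classical
  intro j
  -- combined system
  set r : Fin k ⊕ Fin k → ℚ := Sum.elim b (fun i => -(b' i)) with hr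
  set u : Fin k ⊕ Fin k → ℂ := Sum.elim ω ω' with hu
  have hutot : ∑ x : Fin k ⊕ Fin k, (r x : ℂ) * u x = 0 := by
    rw [Fintype.sum_sum_type]
    simp only [hr, hu, Sum.elim_inl, Sum.elim_inr]
    push_cast
    rw [hsum]
    have : ∑ i : Fin k, (-(b' i : ℂ)) * ω' i = -a := by
      rw [← neg_eq_iff_eq_neg, ← Finset.sum_neg_distrib]
      simp only [neg_mul, neg_neg]
      exact hsum'
    rw [this]; ring
  -- minimal vanishing subset containing inr j
  set C : Finset (Finset (Fin k ⊕ Fin k)) :=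
    Finset.univ.powerset.filter
      (fun T => Sum.inr j ∈ T ∧ ∑ x ∈ T, (r x : ℂ) * u x = 0) with hC
  have hCne : C.Nonempty := by
    refine ⟨Finset.univ, Finset.mem_filter.mpr ⟨Finset.mem_powerset_self _, ⟨Finset.mem_univ _, hutot⟩⟩⟩
  obtain ⟨S, hSC, hSmin⟩ := C.exists_min_image Finset.card hCne
  have hSmem := Finset.mem_filter.mp hSC
  have hjS : Sum.inr j ∈ S := hSmem.2.1
  have hSsum : ∑ x ∈ S, (r x : ℂ) * u x = 0 := hSmem.2.2
  -- S has no vanishing nonempty proper subsum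
  have hSsub : ∀ T : Finset (Fin k ⊕ Fin k), T ⊆ S → T.Nonempty → T ≠ S →
      ∑ x ∈ T, (r x : ℂ) * u x ≠ 0 := by
    intro T hTS hTne hTneS h0
    rcases Finset.decidableMem (Sum.inr j) T with hjT | hjT
    case _ =>
      -- inr j ∉ T: use S \ T
      have hmem : (S \ T) ∈ C := by
        refine Finset.mem_filter.mpr ⟨Finset.mem_powerset.mpr ((Finset.sdiff_subset).trans
          (Finset.mem_powerset.mp hSmem.1)), ⟨Finset.mem_sdiff.mpr ⟨hjS, hjT⟩, ?_⟩⟩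
        rw [Finset.sum_sdiff_eq_sub hTS, hSsum, h0, sub_zero]
      have := hSmin _ hmem
      have hlt : (S \ T).card < S.card := by
        have : T.card ≤ S.card := Finset.card_le_card hTS
        rw [Finset.card_sdiff_of_subset hTS]
        have : 0 < T.card := Finset.card_pos.mpr hTne
        omega
      omega
    case _ =>
      -- inr j ∈ T
      have hmem : T ∈ C := Finset.mem_filter.mpr
        ⟨Finset.mem_powerset.mpr (hTS.trans (Finset.mem_powerset.mp hSmem.1)), ⟨hjT, h0⟩⟩
      have := hSmin _ hmem
      have hlt : T.card < S.card := Finset.card_lt_card (lt_of_le_of_ne hTS hTneS)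
      omega
  -- S contains some inl i
  have hinl : ∃ i : Fin k, Sum.inl i ∈ S := by
    by_contra hno
    push_neg at hno
    set I : Finset (Fin k) := Finset.univ.filter (fun i => Sum.inr i ∈ S) with hI
    have hSI : S = I.map ⟨Sum.inr, Sum.inr_injective⟩ := by
      ext x
      cases x with
      | inl i => simp [Finset.mem_map, hI]; exact fun h => (hno i h)
      | inr i => simp [Finset.mem_map, hI]
    have hIsum : ∑ i ∈ I, (b' i : ℂ) * ω' i = 0 := by
      have h1 : ∑ x ∈ S, (r x : ℂ) * u x = ∑ i ∈ I, (-(b' i : ℂ)) * ω' i := by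
        rw [hSI, Finset.sum_map]
        simp [hr, hu]
      rw [h1] at hSsum
      simp only [neg_mul] at hSsum
      rw [Finset.sum_neg_distrib, neg_eq_zero] at hSsum
      exact hSsum
    have hIne : I.Nonempty := ⟨j, Finset.mem_filter.mpr ⟨Finset.mem_univ _, hjS⟩⟩
    rcases eq_or_ne I Finset.univ with hIu | hIu
    · rw [hIu, hsum'] at hIsum
      exact ha hIsum
    · exact hsub' I hIne hIu hIsum
  obtain ⟨i0, hi0⟩ := hinl
  -- apply Mann on the subtype
  set ι := {x : Fin k ⊕ Fin k // x ∈ S}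
  have hcard : Fintype.card ι = S.card := Fintype.card_coe S
  have hmann := mann ι (fun x => r x.1) (fun x => u x.1)
    (fun x => by cases hx : x.1 with
      | inl i => simpa [hu, hx] using hω i
      | inr i => simpa [hu, hx] using hω' i)
    (by rw [← hSsum]; exact Finset.sum_coe_sort S (fun x => (r x : ℂ) * u x))
    ?hsubty ⟨Sum.inr j, hjS⟩ ⟨Sum.inl i0, hi0⟩
  case hsubty =>
    intro I hIne hIuniv h0
    set T : Finset (Fin k ⊕ Fin k) := I.map (Function.Embedding.subtype _) with hT
    have hTS : T ⊆ S := by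
      intro x hx
      obtain ⟨y, hy, rfl⟩ := Finset.mem_map.mp hx
      exact y.2
    have hTne : T.Nonempty := hIne.map
    have hTneS : T ≠ S := by
      intro hTeq
      apply hIuniv
      have : T.card = S.card := by rw [hTeq]
      rw [hT, Finset.card_map] at this
      apply Finset.eq_univ_of_card
      rw [this, ← hcard]
    apply hSsub T hTS hTne hTneS
    rw [hT, Finset.sum_map]
    simpa using h0
  -- conclude
  have hval : (ω' j / ω i0) ^ (((Finset.range (Fintype.card ι + 1)).filter Nat.Prime).prod id) = 1 := by
    simpa [hu] using hmann
  refine ⟨i0, ?_⟩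
  have hdvd : (((Finset.range (Fintype.card ι + 1)).filter Nat.Prime).prod id) ∣
      (((Finset.range (2 * k + 1)).filter Nat.Prime).prod id) := by
    apply Finset.prod_dvd_prod_of_subset
    apply Finset.filter_subset_filter
    apply Finset.range_subset_range.mpr
    have h1 : S.card ≤ Fintype.card (Fin k ⊕ Fin k) := Finset.card_le_univ S
    simp only [Fintype.card_sum, Fintype.card_fin] at h1
    omega
  obtain ⟨t, ht⟩ := hdvd
  rw [ht, pow_mul, hval, one_pow]
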